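/- Discrete-vs-continuous comparison: let b, r ≥ 1 and β ≥ 0, and define the recursion α^{(t+1)} = α^{(t)} − b(α^{(t)})²/((b+r)α^{(t)} + rβ) with α^{(0)} = α > 0. Let α(t) solve α'(t) = −b α(t)²/((b+r)α(t) + rβ) with α(0) = α. Then α^{(t)} ≤ α(t) for every integer t ≥ 0. -/

import Mathlib

private noncomputable def gfun (b r β x : ℝ) : ℝ := b * x ^ 2 / ((b + r) * x + r * β)

private lemma gfun_nonneg {b r β : ℝ} (hb : 1 ≤ b) (hr : 1 ≤ r) (hβ : 0 ≤ β)
    {x : ℝ} (hx : 0 ≤ x) : 0 ≤ gfun b r β x := by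
  apply div_nonneg
  · nlinarith
  · nlinarith

private lemma gfun_le_self {b r β : ℝ} (hb : 1 ≤ b) (hr : 1 ≤ r) (hβ : 0 ≤ β)
    {x : ℝ} (hx : 0 ≤ x) : gfun b r β x ≤ x := by
  rcases eq_or_lt_of_le hx with h | h
  · simp [gfun, ← h]
  · have hD : 0 < (b + r) * x + r * β := by nlinarith
    rw [gfun, div_le_iff₀ hD]
    have hr0 : (0:ℝ) ≤ r := by linarith
    have h1 : 0 ≤ r * x ^ 2 := mul_nonneg hr0 (sq_nonneg x)
    have h2 : 0 ≤ r * (β * x) := mul_nonneg hr0 (mul_nonneg hβ h.le)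
    nlinarith

private lemma gfun_mono {b r β : ℝ} (hb : 1 ≤ b) (hr : 1 ≤ r) (hβ : 0 ≤ β)
    {x y : ℝ} (hx : 0 ≤ x) (hxy : x ≤ y) : gfun b r β x ≤ gfun b r β y := by
  rcases eq_or_lt_of_le hx with h | h
  · have : gfun b r β x = 0 := by simp [gfun, ← h]
    rw [this]
    exact gfun_nonneg hb hr hβ (le_trans hx hxy)
  · have hy : 0 < y := lt_of_lt_of_le h hxy
    have hDx : 0 < (b + r) * x + r * β := by nlinarith
    have hDy : 0 < (b + r) * y + r * β := by nlinarith
    rw [gfun, gfun, div_le_div_iff₀ hDx hDy]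
    have hb0 : (0:ℝ) ≤ b := by linarith
    have hr0 : (0:ℝ) ≤ r := by linarith
    have hbr : (0:ℝ) ≤ b + r := by linarith
    have hyx : (0:ℝ) ≤ y - x := sub_nonneg.2 hxy
    have h1 : 0 ≤ b * ((b + r) * (x * (y * (y - x)))) :=
      mul_nonneg hb0 (mul_nonneg hbr (mul_nonneg h.le (mul_nonneg hy.le hyx)))
    have h2 : 0 ≤ b * (r * (β * ((x + y) * (y - x)))) :=
      mul_nonneg hb0 (mul_nonneg hr0 (mul_nonneg hβ (mul_nonneg (by linarith) hyx)))
    nlinarith [h1, h2]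

private lemma id_sub_gfun_mono {b r β : ℝ} (hb : 1 ≤ b) (hr : 1 ≤ r) (hβ : 0 ≤ β)
    {x y : ℝ} (hx : 0 ≤ x) (hxy : x ≤ y) :
    x - gfun b r β x ≤ y - gfun b r β y := by
  rcases eq_or_lt_of_le hx with h | h
  · have hgx : gfun b r β x = 0 := by simp [gfun, ← h]
    rw [hgx]
    have := gfun_le_self hb hr hβ (le_trans hx hxy)
    linarith
  · have hy : 0 < y := lt_of_lt_of_le h hxy
    have hDx : 0 < (b + r) * x + r * β := by nlinarith
    have hDy : 0 < (b + r) * y + r * β := by nlinarith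
    have key : gfun b r β y - gfun b r β x ≤ y - x := by
      rw [gfun, gfun, div_sub_div _ _ hDy.ne' hDx.ne', div_le_iff₀ (mul_pos hDy hDx)]
      have hr0 : (0:ℝ) ≤ r := by linarith
      have hbr : (0:ℝ) ≤ b + r := by linarith
      have hyx : (0:ℝ) ≤ y - x := sub_nonneg.2 hxy
      have h1 : 0 ≤ (y - x) * (r * ((b + r) * (x * y))) :=
        mul_nonneg hyx (mul_nonneg hr0 (mul_nonneg hbr (mul_nonneg h.le hy.le)))
      have h2 : 0 ≤ (y - x) * (r * (r * (β * (x + y)))) :=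
        mul_nonneg hyx (mul_nonneg hr0 (mul_nonneg hr0 (mul_nonneg hβ (by linarith))))
      have h3 : 0 ≤ (y - x) * (r * (r * (β * β))) :=
        mul_nonneg hyx (mul_nonneg hr0 (mul_nonneg hr0 (mul_nonneg hβ hβ)))
      nlinarith [h1, h2, h3]
    linarith

private lemma alpha_pos {b r β a : ℝ} (hb : 1 ≤ b) (hr : 1 ≤ r) (hβ : 0 ≤ β)
    (ha : 0 < a) {α : ℝ → ℝ}
    (hα : ∀ t : ℝ, HasDerivAt α (-(gfun b r β (α t))) t) (hα0 : α 0 = a) :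
    ∀ t : ℝ, 0 ≤ t → 0 < α t := by
  have hdiff : Differentiable ℝ α := fun t => (hα t).differentiableAt
  have hcont : Continuous α := hdiff.continuous
  by_contra hcon
  push_neg at hcon
  obtain ⟨t1, ht1, ht1'⟩ := hcon
  set S : Set ℝ := Set.Ici 0 ∩ α ⁻¹' Set.Iic 0 with hS
  have hSne : S.Nonempty := ⟨t1, ht1, ht1'⟩
  have hSbdd : BddBelow S := ⟨0, fun x hx => hx.1⟩
  have hSclosed : IsClosed S := isClosed_Ici.inter (isClosed_Iic.preimage hcont)
  set t0 := sInf S with ht0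
  have ht0S : t0 ∈ S := hSclosed.csInf_mem hSne hSbdd
  have ht0nn : 0 ≤ t0 := ht0S.1
  have ht0ne : α 0 ≤ 0 → False := by intro h; rw [hα0] at h; linarith
  have ht0pos : 0 < t0 := by
    rcases eq_or_lt_of_le ht0nn with h | h
    · exact absurd ht0S.2 (by rw [← h]; intro hc; exact ht0ne hc)
    · exact h
  have hpos : ∀ s, 0 ≤ s → s < t0 → 0 < α s := by
    intro s hs hst
    by_contra hc
    push_neg at hc
    exact absurd (csInf_le hSbdd ⟨hs, hc⟩) (not_le.2 hst)
  -- h(s) = exp s * α s is monotone on [0, t0]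
  set h : ℝ → ℝ := fun s => Real.exp s * α s with hh
  have hder : ∀ s : ℝ, HasDerivAt h (Real.exp s * α s + Real.exp s * (-(gfun b r β (α s)))) s :=
    fun s => (Real.hasDerivAt_exp s).mul (hα s)
  have hmono : MonotoneOn h (Set.Icc 0 t0) := by
    apply monotoneOn_of_deriv_nonneg (convex_Icc 0 t0)
      (Continuous.continuousOn (by continuity))
      (fun s _ => ((hder s).differentiableAt).differentiableWithinAt)
    intro s hs
    rw [interior_Icc] at hs
    rw [(hder s).deriv]
    have hαs : 0 < α s := hpos s hs.1.le hs.2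
    have := gfun_le_self hb hr hβ hαs.le
    have hexp : 0 < Real.exp s := Real.exp_pos s
    nlinarith
  have := hmono (Set.left_mem_Icc.2 ht0nn) (Set.right_mem_Icc.2 ht0nn) ht0nn
  rw [hh] at this
  simp only [Real.exp_zero, one_mul, hα0] at this
  have hexp : 0 < Real.exp t0 := Real.exp_pos t0
  have hle : α t0 ≤ 0 := ht0S.2
  have : Real.exp t0 * α t0 ≤ 0 := mul_nonpos_of_nonneg_of_nonpos hexp.le hle
  linarith

theorem discrete_vs_continuous_comparison (b r β a : ℝ)
    (hb : 1 ≤ b) (hr : 1 ≤ r) (hβ : 0 ≤ β) (ha : 0 < a)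
    (aseq : ℕ → ℝ) (haseq0 : aseq 0 = a)
    (haseq : ∀ t : ℕ,
      aseq (t + 1) = aseq t - b * aseq t ^ 2 / ((b + r) * aseq t + r * β))
    (α : ℝ → ℝ)
    (hα : ∀ t : ℝ, HasDerivAt α (-(b * α t ^ 2 / ((b + r) * α t + r * β))) t)
    (hα0 : α 0 = a) :
    ∀ t : ℕ, aseq t ≤ α t := by
  have hα' : ∀ t : ℝ, HasDerivAt α (-(gfun b r β (α t))) t := hα
  have hapos : ∀ t : ℝ, 0 ≤ t → 0 < α t := alpha_pos hb hr hβ ha hα' hα0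
  have hdiff : Differentiable ℝ α := fun t => (hα' t).differentiableAt
  have hcont : Continuous α := hdiff.continuous
  -- α is antitone on [0, ∞)
  have hanti : AntitoneOn α (Set.Ici 0) := by
    apply antitoneOn_of_deriv_nonpos (convex_Ici 0) hcont.continuousOn
      (fun s _ => (hα' s).differentiableAt.differentiableWithinAt)
    intro s hs
    rw [interior_Ici] at hs
    rw [(hα' s).deriv]
    have := gfun_nonneg hb hr hβ (hapos s hs.le).le
    linarith
  -- step bound: α (t+1) ≥ α t - gfun (α t) for t ≥ 0
  have hstep : ∀ t : ℝ, 0 ≤ t → α t - gfun b r β (α t) ≤ α (t + 1) := by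
    intro t ht
    set c := gfun b r β (α t) with hc
    set h : ℝ → ℝ := fun s => α s + c * s with hh
    have hder : ∀ s : ℝ, HasDerivAt h (-(gfun b r β (α s)) + c) s := by
      intro s
      have h2 : HasDerivAt (fun y : ℝ => c * y) (c * 1) s := (hasDerivAt_id s).const_mul c
      have h3 := (hα' s).add h2
      simp only [mul_one] at h3
      exact h3
    have hmono : MonotoneOn h (Set.Icc t (t + 1)) := by
      apply monotoneOn_of_deriv_nonneg (convex_Icc t (t + 1))
        (Continuous.continuousOn (by continuity))
        (fun s _ => ((hder s).differentiableAt).differentiableWithinAt)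
      intro s hs
      rw [interior_Icc] at hs
      rw [(hder s).deriv]
      have hsnn : 0 ≤ s := le_trans ht hs.1.le
      have hαs := hapos s hsnn
      have hle : α s ≤ α t := hanti (Set.mem_Ici.2 ht) (Set.mem_Ici.2 hsnn) hs.1.le
      have := gfun_mono hb hr hβ hαs.le hle
      rw [hc]
      linarith
    have h1 : h t ≤ h (t + 1) :=
      hmono (Set.left_mem_Icc.2 (by linarith)) (Set.right_mem_Icc.2 (by linarith)) (by linarith)
    rw [hh] at h1
    simp only at h1
    linarith
  -- main induction
  have key : ∀ t : ℕ, 0 ≤ aseq t ∧ aseq t ≤ α t := by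
    intro t
    induction t with
    | zero => simp [haseq0, hα0, ha.le]
    | succ n ih =>
      obtain ⟨hn0, hnle⟩ := ih
      have hrec : aseq (n + 1) = aseq n - gfun b r β (aseq n) := haseq n
      have hαn : 0 ≤ (n : ℝ) := Nat.cast_nonneg n
      constructor
      · rw [hrec]
        have := gfun_le_self hb hr hβ hn0
        linarith
      · have h1 : aseq n - gfun b r β (aseq n) ≤ α n - gfun b r β (α n) :=
          id_sub_gfun_mono hb hr hβ hn0 hnle
        have h2 := hstep (n : ℝ) hαn
        rw [hrec]
        push_cast
        linarith
  exact fun t => (key t).2
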